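/- Let ρ be a compactly supported probability density on ℝ, α > n−1 and β > 0. The partition function Z_n = ∫_{ℝ^n} exp(−β H_n(x_1,...,x_n)) dx_1···dx_n is finite if and only if α > n − 1. -/

import Mathlib

open MeasureTheory ProbabilityTheory Filter Real Set
open scoped ENNReal BigOperators

noncomputable section

/-- Sum over pairs `i < j` of `|x i - x j|`. -/
def pairSum (n : ℕ) (x : Fin n → ℝ) : ℝ :=
  ∑ p ∈ Finset.univ.filter (fun p : Fin n × Fin n => p.1 < p.2), |x p.1 - x p.2|

/-- Coulomb potential generated by a background with density `ρ` :
`U_ρ(x) = −∫ |x−y|/2 ρ(y) dy`. -/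
def coulombU (ρ : ℝ → ℝ) (x : ℝ) : ℝ := -∫ y, |x - y| / 2 * ρ y

/-- Jellium energy of `n` unit negative charges in a background of total charge `α`
smeared according to the density `ρ` :
`H_n(x) = −(1/2)∑_{i<j}|x_i − x_j| − α ∑_i U_ρ(x_i)`. -/
def jelliumH (n : ℕ) (α : ℝ) (ρ : ℝ → ℝ) (x : Fin n → ℝ) : ℝ :=
  -(1 / 2) * pairSum n x - α * ∑ i, coulombU ρ (x i)

/-- Auxiliary identity: summing `a i + a j` over pairs `i < j` gives `(n-1) ∑ a i`. -/
lemma jellium_sum_pairs (n : ℕ) (a : Fin n → ℝ) :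
    ∑ p ∈ Finset.univ.filter (fun p : Fin n × Fin n => p.1 < p.2), (a p.1 + a p.2)
      = ((n : ℝ) - 1) * ∑ i, a i := by
  have h1 : ∑ p ∈ Finset.univ.filter (fun p : Fin n × Fin n => p.1 ≠ p.2), a p.1
      = ((n : ℝ) - 1) * ∑ i, a i := by
    rw [Finset.sum_filter, Fintype.sum_prod_type]
    have : ∀ i : Fin n, (∑ j : Fin n, if i ≠ j then a i else 0) = ((n:ℝ) - 1) * a i := by
      intro i
      have h : ∀ j : Fin n, (if i ≠ j then a i else 0) = a i - (if i = j then a i else 0) := by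
        intro j; by_cases h : i = j <;> simp [h]
      simp_rw [h, Finset.sum_sub_distrib, Finset.sum_const, Finset.sum_ite_eq]
      simp only [Finset.mem_univ, if_true, Finset.card_univ, Fintype.card_fin, nsmul_eq_mul]
      ring
    simp_rw [this, ← Finset.mul_sum]
  rw [← h1, Finset.sum_add_distrib]
  have h2 : ∑ p ∈ Finset.univ.filter (fun p : Fin n × Fin n => p.1 < p.2), a p.2
      = ∑ p ∈ Finset.univ.filter (fun p : Fin n × Fin n => p.2 < p.1), a p.1 := by
    apply Finset.sum_nbij' (fun p => (p.2, p.1)) (fun p => (p.2, p.1)) <;>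
      simp [Finset.mem_filter]
  rw [h2]
  have h3 : Finset.univ.filter (fun p : Fin n × Fin n => p.1 ≠ p.2)
      = (Finset.univ.filter (fun p : Fin n × Fin n => p.1 < p.2)) ∪
        (Finset.univ.filter (fun p : Fin n × Fin n => p.2 < p.1)) := by
    ext p
    simp only [Finset.mem_filter, Finset.mem_univ, true_and, Finset.mem_union]
    exact ⟨fun h => h.lt_or_gt, fun h => h.elim ne_of_lt (fun h' => (ne_of_lt h').symm)⟩
  rw [h3, Finset.sum_union]
  rw [Finset.disjoint_filter]
  intro p _ ha hb
  exact absurd hb (not_lt.2 ha.le)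

/-- Integrability of `exp (-γ |t|)`. -/
lemma jellium_integrable_exp_abs {γ : ℝ} (hγ : 0 < γ) :
    Integrable (fun t : ℝ => Real.exp (-γ * |t|)) := by
  rw [← integrableOn_univ, ← @Iio_union_Ici _ _ (0 : ℝ), integrableOn_union,
    integrableOn_Ici_iff_integrableOn_Ioi]
  constructor
  · rw [← (Measure.measurePreserving_neg (volume : Measure ℝ)).integrableOn_comp_preimage
      (Homeomorph.neg ℝ).measurableEmbedding]
    simp only [Function.comp_def, abs_neg, neg_preimage, neg_Iio, neg_zero]
    exact (exp_neg_integrableOn_Ioi 0 hγ).congr_fun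
      (fun x hx => by rw [abs_of_pos hx]) measurableSet_Ioi
  · exact (exp_neg_integrableOn_Ioi 0 hγ).congr_fun
      (fun x hx => by rw [abs_of_pos hx]) measurableSet_Ioi

set_option maxHeartbeats 2000000 in
/-- The partition function `Z_n = ∫_{ℝⁿ} exp(−β H_n) dx` of the jellium with a compactly
supported background probability density is finite if and only if `α > n − 1`. -/
theorem partition_function_finite_iff
    (n : ℕ) (β α : ℝ) (hβ : 0 < β) (hα : 0 < α)
    (ρ : ℝ → ℝ) (hρmeas : Measurable ρ) (hρ0 : ∀ x, 0 ≤ ρ x)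
    (hρ1 : ∫ x, ρ x = 1) (hρc : HasCompactSupport ρ) :
    (∫⁻ x : Fin n → ℝ, ENNReal.ofReal (Real.exp (-β * jelliumH n α ρ x))) ≠ ⊤ ↔
      (n : ℝ) - 1 < α := by
  -- Basic facts about ρ
  have hρInt : Integrable ρ := by
    by_contra h
    rw [integral_undef h] at hρ1
    exact one_ne_zero hρ1.symm
  obtain ⟨R₀, hR₀⟩ := hρc.isCompact.isBounded.subset_closedBall 0
  set R := max R₀ 0 with hRdef
  have hR0 : 0 ≤ R := le_max_right _ _
  have hsupp : ∀ y : ℝ, R < |y| → ρ y = 0 := by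
    intro y hy
    apply image_eq_zero_of_notMem_tsupport
    intro hmem
    have h := hR₀ hmem
    rw [Metric.mem_closedBall, Real.dist_eq, sub_zero] at h
    exact absurd (h.trans (le_max_left _ _)) (not_le.2 hy)
  have hKint : ∀ x : ℝ, Integrable (fun y => |x - y| / 2 * ρ y) := by
    intro x
    apply Integrable.mono' (hρInt.const_mul ((|x| + R) / 2))
    · exact (((measurable_const.sub measurable_id).abs.div_const 2).mul
        hρmeas).aestronglyMeasurable
    · filter_upwards with y
      rw [Real.norm_eq_abs, abs_of_nonneg (mul_nonneg (by positivity) (hρ0 y))]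
      by_cases h : ρ y = 0
      · simp [h]
      · have hyR : |y| ≤ R := le_of_not_gt (fun hc => h (hsupp y hc))
        have hxy : |x - y| ≤ |x| + R := (abs_sub x y).trans (by linarith)
        exact mul_le_mul_of_nonneg_right (by linarith) (hρ0 y)
  have hUle : ∀ x : ℝ, coulombU ρ x ≤ (R - |x|) / 2 := by
    intro x
    have hmono : (|x| - R) / 2 * 1 ≤ ∫ y, |x - y| / 2 * ρ y := by
      rw [← hρ1, ← integral_const_mul]
      apply integral_mono (hρInt.const_mul _) (hKint x)
      intro y
      by_cases h : ρ y = 0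
      · simp [h]
      · have hyR : |y| ≤ R := le_of_not_gt (fun hc => h (hsupp y hc))
        have habs : |x| - R ≤ |x - y| := by
          have := abs_sub_abs_le_abs_sub x y
          linarith
        exact mul_le_mul_of_nonneg_right (by linarith) (hρ0 y)
    rw [coulombU]
    linarith
  have hyρInt : Integrable (fun y => y * ρ y) := by
    apply Integrable.mono' (hρInt.const_mul R)
    · exact (measurable_id.mul hρmeas).aestronglyMeasurable
    · filter_upwards with y
      rw [Real.norm_eq_abs, abs_mul, abs_of_nonneg (hρ0 y)]
      by_cases h : ρ y = 0
      · simp [h]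
      · exact mul_le_mul_of_nonneg_right
          (le_of_not_gt fun hc => h (hsupp y hc)) (hρ0 y)
  have hUeq : ∀ x : ℝ, R ≤ x → coulombU ρ x = ((∫ y, y * ρ y) - x) / 2 := by
    intro x hx
    have hptw : ∀ y, |x - y| / 2 * ρ y = x / 2 * ρ y - 1 / 2 * (y * ρ y) := by
      intro y
      by_cases h : ρ y = 0
      · simp [h]
      · have hyR : |y| ≤ R := le_of_not_gt (fun hc => h (hsupp y hc))
        have hxy : 0 ≤ x - y := by
          have := abs_le.1 hyR
          linarith [this.2]
        rw [abs_of_nonneg hxy]; ring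
    rw [coulombU]
    simp only [hptw]
    rw [integral_sub (hρInt.const_mul _) (hyρInt.const_mul _),
      integral_const_mul, integral_const_mul, hρ1]
    ring
  constructor
  · -- finiteness implies α > n - 1
    intro hfin
    by_contra hcon
    push_neg at hcon
    have hn1 : (1 : ℝ) < n := by linarith
    have hn2 : 2 ≤ n := by
      have : 1 < n := by exact_mod_cast hn1
      omega
    obtain ⟨k, rfl⟩ : ∃ k, n = k + 2 := ⟨n - 2, by omega⟩
    set lst : Fin (k + 2) := Fin.last (k + 1) with hlst
    set T : ℝ := R + (k + 2) with hT
    set s : Fin (k + 2) → Set ℝ :=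
      fun i => if i = lst then Ici T else Ico (R + i.val) (R + i.val + 1) with hs
    set S : Set (Fin (k + 2) → ℝ) := Set.pi univ s with hS
    have hmeasS : MeasurableSet S := by
      apply MeasurableSet.univ_pi
      intro i
      by_cases h : i = lst
      · simp only [hs]; rw [if_pos h]; exact measurableSet_Ici
      · simp only [hs]; rw [if_neg h]; exact measurableSet_Ico
    set m : ℝ := ∫ y, y * ρ y with hm
    set C₀ : ℝ := -(β / 2) * (k + 1) * T + β * α / 2 * ((k + 2) * m - (k + 1) * T) with hC₀
    have key : ∀ x ∈ S, C₀ ≤ -β * jelliumH (k + 2) α ρ x := by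
      intro x hx
      have hxi : ∀ i : Fin (k + 2), i ≠ lst → R + i.val ≤ x i ∧ x i < R + i.val + 1 := by
        intro i hi
        have h := hx i (mem_univ i)
        rw [hs] at h
        simp only [if_neg hi] at h
        exact ⟨h.1, h.2⟩
      have hxlst : T ≤ x lst := by
        have h := hx lst (mem_univ lst)
        rw [hs] at h
        simp only [if_pos rfl] at h
        exact h
      have hT0 : 0 ≤ T := by positivity
      have hxiT : ∀ i : Fin (k + 2), i ≠ lst → x i ≤ T := by
        intro i hi
        have h1 := (hxi i hi).2
        have h2 : (i.val : ℝ) + 1 ≤ (k + 2 : ℝ) := by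
          have hv : i.val < k + 1 := Fin.lt_last_iff_ne_last.2 hi
          have hv' : (i.val : ℝ) < (k + 1 : ℝ) := by exact_mod_cast hv
          linarith
        rw [hT]; linarith
      have hxR : ∀ i : Fin (k + 2), R ≤ x i := by
        intro i
        by_cases hi : i = lst
        · subst hi; rw [hT] at hxlst; nlinarith [hxlst]
        · have h1 := (hxi i hi).1
          have h2 : (0:ℝ) ≤ i.val := by positivity
          linarith
      have hP : (k + 1 : ℝ) * (x lst - T) ≤ pairSum (k + 2) x := by
        have hsub : ((Finset.univ.erase lst).image (fun i => (i, lst))) ⊆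
            Finset.univ.filter (fun p : Fin (k + 2) × Fin (k + 2) => p.1 < p.2) := by
          intro p hp
          simp only [Finset.mem_image, Finset.mem_erase] at hp
          obtain ⟨i, ⟨hi, -⟩, rfl⟩ := hp
          simp only [Finset.mem_filter, Finset.mem_univ, true_and]
          exact Fin.lt_last_iff_ne_last.2 hi
        have hcard : (Finset.univ.erase lst).card = k + 1 := by
          rw [Finset.card_erase_of_mem (Finset.mem_univ _), Finset.card_univ, Fintype.card_fin]
          omega
        have himg : ∑ p ∈ (Finset.univ.erase lst).image (fun i => (i, lst)),
              |x p.1 - x p.2| = ∑ i ∈ Finset.univ.erase lst, |x i - x lst| :=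
          Finset.sum_image (fun a _ b _ hab => congrArg Prod.fst hab)
        have h1 : ∑ i ∈ Finset.univ.erase lst, |x i - x lst| ≤ pairSum (k + 2) x := by
          rw [pairSum, ← himg]
          exact Finset.sum_le_sum_of_subset_of_nonneg hsub (fun _ _ _ => abs_nonneg _)
        have h2 : (k + 1 : ℝ) * (x lst - T) ≤ ∑ i ∈ Finset.univ.erase lst, |x i - x lst| := by
          calc (k + 1 : ℝ) * (x lst - T)
              = ∑ _i ∈ Finset.univ.erase lst, (x lst - T) := by
                rw [Finset.sum_const, hcard, nsmul_eq_mul]; push_cast; ring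
            _ ≤ ∑ i ∈ Finset.univ.erase lst, |x i - x lst| := by
                apply Finset.sum_le_sum
                intro i hi
                have hiT : x i ≤ T := hxiT i (Finset.mem_erase.1 hi).1
                calc x lst - T ≤ x lst - x i := by linarith
                  _ ≤ |x lst - x i| := le_abs_self _
                  _ = |x i - x lst| := abs_sub_comm _ _
        linarith
      have hUsum : ((k + 2 : ℝ) * m - (x lst + (k + 1) * T)) / 2
          ≤ ∑ i, coulombU ρ (x i) := by
        have heq : ∑ i, coulombU ρ (x i) = ((k + 2 : ℝ) * m - ∑ i, x i) / 2 := by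
          have h : ∀ i : Fin (k + 2), coulombU ρ (x i) = (m - x i) / 2 :=
            fun i => hUeq (x i) (hxR i)
          simp_rw [h]
          rw [← Finset.sum_div, Finset.sum_sub_distrib, Finset.sum_const, Finset.card_univ,
            Fintype.card_fin, nsmul_eq_mul]
          push_cast; ring_nf
        have hcard : (Finset.univ.erase lst).card = k + 1 := by
          rw [Finset.card_erase_of_mem (Finset.mem_univ _), Finset.card_univ, Fintype.card_fin]
          omega
        have hsumx : ∑ i, x i ≤ x lst + (k + 1 : ℝ) * T := by
          rw [← Finset.add_sum_erase _ _ (Finset.mem_univ lst)]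
          have h : ∑ i ∈ Finset.univ.erase lst, x i ≤ ∑ _i ∈ Finset.univ.erase lst, T :=
            Finset.sum_le_sum (fun i hi => hxiT i (Finset.mem_erase.1 hi).1)
          rw [Finset.sum_const, hcard, nsmul_eq_mul] at h
          push_cast at h ⊢
          linarith
        rw [heq]
        gcongr
      have hklast : α ≤ (k + 1 : ℝ) := by push_cast at hcon; linarith
      have e1 : β / 2 * ((k + 1 : ℝ) * (x lst - T)) ≤ β / 2 * pairSum (k + 2) x :=
        mul_le_mul_of_nonneg_left hP (by positivity)
      have e2 : β * α * (((k + 2 : ℝ) * m - (x lst + (k + 1) * T)) / 2)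
          ≤ β * α * ∑ i, coulombU ρ (x i) :=
        mul_le_mul_of_nonneg_left hUsum (by positivity)
      have e3 : 0 ≤ β / 2 * ((k + 1 : ℝ) - α) * x lst := by
        apply mul_nonneg (mul_nonneg (by positivity) (by linarith))
        linarith
      rw [jelliumH, hC₀]
      nlinarith [e1, e2, e3]
    have hvolS : volume S = ⊤ := by
      rw [hS, volume_pi_pi]
      rw [Finset.prod_eq_single_of_mem lst (Finset.mem_univ _) ?_]
      · have hsl : s lst = Ici T := by simp [hs]
        rw [hsl]; exact Real.volume_Ici
      · intro i _ hi
        have hsi : s i = Ico (R + i.val) (R + i.val + 1) := by simp [hs, hi]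
        rw [hsi, Real.volume_Ico]
        norm_num
    have hbound : ∀ x : Fin (k + 2) → ℝ,
        S.indicator (fun _ => ENNReal.ofReal (Real.exp C₀)) x
          ≤ ENNReal.ofReal (Real.exp (-β * jelliumH (k + 2) α ρ x)) := by
      intro x
      by_cases hx : x ∈ S
      · rw [indicator_of_mem hx]
        exact ENNReal.ofReal_le_ofReal (exp_le_exp.2 (key x hx))
      · rw [indicator_of_notMem hx]; exact zero_le
    apply hfin
    have hle : (⊤ : ℝ≥0∞) ≤ ∫⁻ x : Fin (k + 2) → ℝ,
        ENNReal.ofReal (Real.exp (-β * jelliumH (k + 2) α ρ x)) := by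
      calc (⊤ : ℝ≥0∞) = ENNReal.ofReal (Real.exp C₀) * volume S := by
            rw [hvolS, ENNReal.mul_top (by simp [Real.exp_pos])]
        _ = ∫⁻ x, S.indicator (fun _ => ENNReal.ofReal (Real.exp C₀)) x := by
            rw [lintegral_indicator hmeasS, setLIntegral_const]
        _ ≤ _ := lintegral_mono hbound
    exact top_le_iff.1 hle
  · -- α > n - 1 implies finiteness
    intro hα'
    set γ : ℝ := β / 2 * (α - ((n : ℝ) - 1)) with hγdef
    have hγ : 0 < γ := mul_pos (by positivity) (sub_pos.2 hα')
    have hgInt : Integrable (fun t : ℝ => Real.exp (β * α * R / 2 + -γ * |t|)) := by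
      simp_rw [Real.exp_add]
      exact (jellium_integrable_exp_abs hγ).const_mul _
    have hprod : Integrable
        (fun x : Fin n → ℝ => ∏ i, Real.exp (β * α * R / 2 + -γ * |x i|)) :=
      Integrable.fintype_prod (fun _ => hgInt)
    apply ne_of_lt
    apply lt_of_le_of_lt _ hprod.lintegral_lt_top
    apply lintegral_mono
    intro x
    apply ENNReal.ofReal_le_ofReal
    rw [← Real.exp_sum]
    apply Real.exp_le_exp.2
    have hP : pairSum n x ≤ ((n : ℝ) - 1) * ∑ i, |x i| := by
      rw [← jellium_sum_pairs n (fun i => |x i|), pairSum]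
      exact Finset.sum_le_sum (fun p _ => abs_sub _ _)
    have hU : ∑ i, coulombU ρ (x i) ≤ ∑ i, (R - |x i|) / 2 :=
      Finset.sum_le_sum (fun i _ => hUle (x i))
    have hU2 : ∑ i, (R - |x i|) / 2 = ((n : ℝ) * R - ∑ i, |x i|) / 2 := by
      rw [← Finset.sum_div, Finset.sum_sub_distrib, Finset.sum_const, Finset.card_univ,
        Fintype.card_fin, nsmul_eq_mul]
    have hsplit : ∑ i, (β * α * R / 2 + -γ * |x i|)
        = (n : ℝ) * (β * α * R / 2) + -γ * ∑ i, |x i| := by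
      rw [Finset.sum_add_distrib, Finset.sum_const, Finset.card_univ, Fintype.card_fin,
        nsmul_eq_mul, ← Finset.mul_sum]
    rw [hsplit, hγdef, jelliumH]
    have e1 : β / 2 * pairSum n x ≤ β / 2 * (((n : ℝ) - 1) * ∑ i, |x i|) :=
      mul_le_mul_of_nonneg_left hP (by positivity)
    have e2 : β * α * ∑ i, coulombU ρ (x i) ≤ β * α * (((n : ℝ) * R - ∑ i, |x i|) / 2) := by
      rw [← hU2]
      exact mul_le_mul_of_nonneg_left hU (by positivity)
    nlinarith [e1, e2]
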